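/- Let E be a finite effect algebra with (pairwise distinct) atoms a_1,…,a_m, let A ∈ M(E) be an n×m matrix whose rows enumerate Seq(E), and let B = (A|1) be A augmented by a column of ones. Then E has a state if and only if rank A = rank B and there exist nonnegative real numbers s_1,…,s_m such that A·(s_1,…,s_m)ᵀ = (1,…,1)ᵀ, i.e. Σ_{t=1}^m y_{it} s_t = 1 for every row i of A. -/

import Mathlib

/-- An effect algebra: a set with 0, 1 and a partially defined binary
operation `⊕`, modeled as an `Option`-valued operation. -/
structure EffectAlgebra (E : Type*) where
  oplus : E → E → Option E
  zero : E
  one : E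
  comm : ∀ p q, oplus p q = oplus q p
  assoc : ∀ p q r s qr, oplus q r = some qr → oplus p qr = some s →
    ∃ pq, oplus p q = some pq ∧ oplus pq r = some s
  orthosupp : ∀ p, ∃! q, oplus p q = some one
  zero_unit : ∀ p q, oplus one p = some q → p = zero

namespace EffectAlgebra

variable {E : Type*}

/-- `p ≤ q` iff there is `r` with `p ⊕ r` defined and equal to `q`. -/
def le (W : EffectAlgebra E) (p q : E) : Prop := ∃ r, W.oplus p r = some q

/-- An atom is a minimal element of `E \ {0}`. -/
def IsAtomElem (W : EffectAlgebra E) (x : E) : Prop :=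
  x ≠ W.zero ∧ ∀ y : E, W.le y x → y ≠ W.zero → y = x

/-- Partial orthosum of a list of elements. -/
def listSum (W : EffectAlgebra E) : List E → Option E
  | [] => some W.zero
  | x :: xs => (listSum W xs).bind (fun y => W.oplus x y)

/-- The orthosum `k 0 • a 0 ⊕ ⋯ ⊕ k (m-1) • a (m-1)`, when defined. -/
def mulSum (W : EffectAlgebra E) {m : ℕ} (a : Fin m → E) (k : Fin m → ℕ) : Option E :=
  W.listSum ((List.ofFn (fun t => List.replicate (k t) (a t))).flatten)

/-- `Seq(E)`: tuples `k` with `⨁ k t • a t` defined and equal to `1`. -/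
def SeqSet (W : EffectAlgebra E) {m : ℕ} (a : Fin m → E) : Set (Fin m → ℕ) :=
  {k | W.mulSum a k = some W.one}

/-- `a : Fin m → E` enumerates the atoms of `E` without repetition. -/
def AtomFamily (W : EffectAlgebra E) {m : ℕ} (a : Fin m → E) : Prop :=
  Function.Injective a ∧ (∀ t, W.IsAtomElem (a t)) ∧
    ∀ x : E, W.IsAtomElem x → ∃ t, x = a t

/-- `A ∈ M(E)`: the rows of `A` are pairwise distinct and enumerate `Seq(E)`. -/
def MemM (W : EffectAlgebra E) {m n : ℕ} (a : Fin m → E) (A : Matrix (Fin n) (Fin m) ℕ) : Prop :=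
  (∀ i j : Fin n, i ≠ j → ∃ t, A i t ≠ A j t) ∧
    {k : Fin m → ℕ | ∃ i, A i = k} = W.SeqSet a

/-- A state on an effect algebra. -/
def IsState (W : EffectAlgebra E) (s : E → ℝ) : Prop :=
  (∀ x, 0 ≤ s x ∧ s x ≤ 1) ∧ s W.one = 1 ∧
    ∀ p q r, W.oplus p q = some r → s p + s q ≤ 1 ∧ s r = s p + s q

end EffectAlgebra

/-- `(A|1)`: the matrix `A` augmented by a column of ones. -/
def augmentOnes {n m : ℕ} {R : Type*} [One R] (A : Matrix (Fin n) (Fin m) R) :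
    Matrix (Fin n) (Fin (m + 1)) R :=
  Matrix.of fun i j => if h : (j : ℕ) < m then A i ⟨j, h⟩ else 1


namespace EffectAlgebra

variable {E : Type*} (W : EffectAlgebra E)

lemma one_oplus_zero : W.oplus W.one W.zero = some W.one := by
  obtain ⟨q, hq, -⟩ := W.orthosupp W.one
  have h := W.zero_unit q W.one hq
  rwa [h] at hq

lemma zero_oplus_one : W.oplus W.zero W.one = some W.one := by
  rw [W.comm]; exact W.one_oplus_zero

lemma assoc' {p q r s pq : E} (h1 : W.oplus p q = some pq) (h2 : W.oplus pq r = some s) :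
    ∃ qr, W.oplus q r = some qr ∧ W.oplus p qr = some s := by
  rw [W.comm] at h2
  obtain ⟨rp, hrp, hrpq⟩ := W.assoc r p q s pq h1 h2
  rw [W.comm] at hrpq
  obtain ⟨qr, hqr, h⟩ := W.assoc q r p s rp hrp hrpq
  rw [W.comm] at h
  exact ⟨qr, hqr, h⟩

lemma zero_oplus (p : E) : W.oplus W.zero p = some p := by
  obtain ⟨p', hp', -⟩ := W.orthosupp p
  obtain ⟨q, hq, hq2⟩ := W.assoc W.zero p p' W.one W.one hp' W.zero_oplus_one
  obtain ⟨r, -, hr⟩ := W.orthosupp p'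
  have e1 : q = r := hr q (by show W.oplus p' q = some W.one; rw [W.comm]; exact hq2)
  have e2 : p = r := hr p (by show W.oplus p' p = some W.one; rw [W.comm]; exact hp')
  rw [hq, e1, e2]

lemma oplus_zero (p : E) : W.oplus p W.zero = some p := by
  rw [W.comm]; exact W.zero_oplus p

lemma cancel {x b c d : E} (h1 : W.oplus x b = some d) (h2 : W.oplus x c = some d) : b = c := by
  obtain ⟨d', hd', -⟩ := W.orthosupp d
  have hd'2 : W.oplus d' d = some W.one := by rw [W.comm]; exact hd'
  obtain ⟨u, hu, hub⟩ := W.assoc d' x b W.one d h1 hd'2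
  obtain ⟨u', hu', huc⟩ := W.assoc d' x c W.one d h2 hd'2
  rw [hu] at hu'
  obtain rfl := Option.some.inj hu'
  obtain ⟨r, -, hr⟩ := W.orthosupp u
  exact (hr b hub).trans (hr c huc).symm

lemma eq_zero_of_oplus_eq_self {x y : E} (h : W.oplus x y = some x) : y = W.zero :=
  W.cancel h (W.oplus_zero x)

lemma oplus_eq_zero_left {p r : E} (h : W.oplus p r = some W.zero) : p = W.zero := by
  obtain ⟨r1, hr1, hpr1⟩ := W.assoc' h W.zero_oplus_one
  have hr0 : r = W.zero := W.zero_unit r r1 (by rw [W.comm]; exact hr1)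
  subst hr0
  rw [W.zero_oplus_one] at hr1
  obtain rfl := Option.some.inj hr1
  exact W.zero_unit p W.one (by rw [W.comm]; exact hpr1)

lemma le_refl' (x : E) : W.le x x := ⟨W.zero, W.oplus_zero x⟩

lemma le_trans' {p q r : E} (h1 : W.le p q) (h2 : W.le q r) : W.le p r := by
  obtain ⟨u, hu⟩ := h1; obtain ⟨v, hv⟩ := h2
  obtain ⟨uv, -, h⟩ := W.assoc' hu hv
  exact ⟨uv, h⟩

lemma le_antisymm' {p q : E} (h1 : W.le p q) (h2 : W.le q p) : p = q := by
  obtain ⟨u, hu⟩ := h1; obtain ⟨v, hv⟩ := h2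
  obtain ⟨uv, huv, h⟩ := W.assoc' hu hv
  have h0 : uv = W.zero := W.cancel h (W.oplus_zero p)
  subst h0
  have hu0 : u = W.zero := W.oplus_eq_zero_left huv
  subst hu0
  rw [W.oplus_zero] at hu
  exact Option.some.inj hu



lemma listSum_cons (x : E) (l : List E) :
    W.listSum (x :: l) = (W.listSum l).bind (fun y => W.oplus x y) := rfl

lemma listSum_append {l₁ l₂ : List E} {s : E} (h : W.listSum (l₁ ++ l₂) = some s) :
    ∃ y z, W.listSum l₁ = some y ∧ W.listSum l₂ = some z ∧ W.oplus y z = some s := by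
  induction l₁ generalizing s with
  | nil => exact ⟨W.zero, s, rfl, h, W.zero_oplus s⟩
  | cons x l₁ ih =>
    rw [List.cons_append, W.listSum_cons, Option.bind_eq_some_iff] at h
    obtain ⟨u, hu, hxu⟩ := h
    obtain ⟨y, z, hy, hz, hyz⟩ := ih hu
    obtain ⟨xy, hxy, hxyz⟩ := W.assoc x y z s u hyz hxu
    exact ⟨xy, z, by rw [W.listSum_cons, hy, Option.bind_some]; exact hxy, hz, hxyz⟩

lemma listSum_append' {l₁ l₂ : List E} {y z s : E} (h1 : W.listSum l₁ = some y)
    (h2 : W.listSum l₂ = some z) (h3 : W.oplus y z = some s) :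
    W.listSum (l₁ ++ l₂) = some s := by
  induction l₁ generalizing y s with
  | nil =>
    obtain rfl := Option.some.inj h1
    rw [W.zero_oplus] at h3
    obtain rfl := Option.some.inj h3
    exact h2
  | cons x l₁ ih =>
    rw [W.listSum_cons, Option.bind_eq_some_iff] at h1
    obtain ⟨u, hu, hxu⟩ := h1
    obtain ⟨uz, huz, hxuz⟩ := W.assoc' hxu h3
    rw [List.cons_append, W.listSum_cons, ih hu huz, Option.bind_some]
    exact hxuz

lemma listSum_swap_aux {x y u s : E}
    (h : (W.oplus x u).bind (fun v => W.oplus y v) = some s) :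
    (W.oplus y u).bind (fun v => W.oplus x v) = some s := by
  rw [Option.bind_eq_some_iff] at h
  obtain ⟨xu, hxu, hyxu⟩ := h
  obtain ⟨yx, hyx, hyxu2⟩ := W.assoc y x u s xu hxu hyxu
  rw [W.comm] at hyx
  obtain ⟨yu, hyu, h2⟩ := W.assoc' hyx hyxu2
  rw [hyu, Option.bind_some]
  exact h2

lemma listSum_perm {l l' : List E} (h : l.Perm l') : W.listSum l = W.listSum l' := by
  induction h with
  | nil => rfl
  | cons x _ ih => rw [W.listSum_cons, W.listSum_cons, ih]
  | trans _ _ ih1 ih2 => rw [ih1, ih2]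
  | swap x y l =>
    rw [W.listSum_cons, W.listSum_cons, W.listSum_cons, W.listSum_cons]
    cases hu : W.listSum l with
    | none => rfl
    | some u =>
      rw [Option.bind_some, Option.bind_some]
      cases hc : (W.oplus y u).bind (fun v => W.oplus x v) with
      | some s => exact W.listSum_swap_aux hc
      | none =>
        cases hc2 : (W.oplus x u).bind (fun v => W.oplus y v) with
        | none => rfl
        | some s => rw [W.listSum_swap_aux hc2] at hc; exact hc.symm ▸ hc

lemma exists_atomList [Fintype E] (x : E) :
    ∃ l : List E, (∀ y ∈ l, W.IsAtomElem y) ∧ W.listSum l = some x := by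
  classical
  suffices h : ∀ N : ℕ, ∀ x : E, Set.ncard {y | W.le y x} ≤ N →
      ∃ l : List E, (∀ y ∈ l, W.IsAtomElem y) ∧ W.listSum l = some x from
    h _ x le_rfl
  intro N
  induction N with
  | zero =>
    intro x hx
    exfalso
    have hmem : x ∈ {y | W.le y x} := W.le_refl' x
    have hne : ({y | W.le y x}).ncard ≠ 0 := by
      intro h
      rw [Set.ncard_eq_zero (Set.toFinite _)] at h
      rw [h] at hmem; exact hmem
    omega
  | succ N ih =>
    intro x hx
    by_cases h0 : x = W.zero
    · subst h0; exact ⟨[], by simp, rfl⟩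
    by_cases hat : W.IsAtomElem x
    · refine ⟨[x], by simp [hat], ?_⟩
      rw [W.listSum_cons]
      show (some W.zero).bind _ = _
      rw [Option.bind_some]; exact W.oplus_zero x
    · have hex : ∃ y, W.le y x ∧ y ≠ W.zero ∧ y ≠ x := by
        by_contra hc
        push_neg at hc
        exact hat ⟨h0, fun y hy hy0 => hc y hy hy0⟩
      obtain ⟨y, ⟨r, hyr⟩, hy0, hyx⟩ := hex
      have hrx : W.le r x := ⟨y, by rw [W.comm]; exact hyr⟩
      have hrnex : r ≠ x := by
        rintro rfl
        refine hy0 ?_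
        have : W.oplus r y = some r := by rw [W.comm]; exact hyr
        exact W.eq_zero_of_oplus_eq_self this
      have hcard : ∀ z : E, W.le z x → z ≠ x → Set.ncard {w | W.le w z} ≤ N := by
        intro z hz hzx
        have hsub1 : {w | W.le w z} ⊆ {w | W.le w x} := fun w hw => W.le_trans' hw hz
        have hne : x ∉ {w | W.le w z} :=
          fun hmem => hzx ((W.le_antisymm' hmem hz)).symm
        have hssub : {w | W.le w z} ⊂ {w | W.le w x} :=
          hsub1.ssubset_of_ne (fun he => hne (by rw [he]; exact W.le_refl' x))
        have := Set.ncard_lt_ncard hssub (Set.toFinite _)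
        omega
      obtain ⟨ly, hly, hlys⟩ := ih y (hcard y ⟨r, hyr⟩ hyx)
      obtain ⟨lr, hlr, hlrs⟩ := ih r (hcard r hrx hrnex)
      refine ⟨ly ++ lr, ?_, W.listSum_append' hlys hlrs hyr⟩
      intro z hz
      rcases List.mem_append.1 hz with h | h
      exacts [hly z h, hlr z h]



lemma count_flattenList [DecidableEq E] {m : ℕ} (a : Fin m → E) (k : Fin m → ℕ) (x : E) :
    List.count x ((List.ofFn (fun t => List.replicate (k t) (a t))).flatten)
      = ∑ t : Fin m, if a t = x then k t else 0 := by
  rw [List.count_flatten, List.map_ofFn, List.sum_ofFn]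
  simp [Function.comp, List.count_replicate]

lemma flattenList_add_perm [DecidableEq E] {m : ℕ} (a : Fin m → E) (k l : Fin m → ℕ) :
    ((List.ofFn (fun t => List.replicate ((k + l) t) (a t))).flatten).Perm
      (((List.ofFn (fun t => List.replicate (k t) (a t))).flatten)
        ++ ((List.ofFn (fun t => List.replicate (l t) (a t))).flatten)) := by
  rw [List.perm_iff_count]
  intro x
  rw [List.count_append, count_flattenList, count_flattenList, count_flattenList,
    ← Finset.sum_add_distrib]
  refine Finset.sum_congr rfl (fun t _ => ?_)
  by_cases h : a t = x <;> simp [h]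

lemma mulSum_oplus {m : ℕ} {a : Fin m → E} {k l : Fin m → ℕ} {p q r : E}
    (hk : W.mulSum a k = some p) (hl : W.mulSum a l = some q) (h : W.oplus p q = some r) :
    W.mulSum a (k + l) = some r := by
  classical
  unfold mulSum at *
  rw [W.listSum_perm (flattenList_add_perm a k l)]
  exact W.listSum_append' hk hl h

lemma exists_mulSum [Fintype E] {m : ℕ} {a : Fin m → E} (ha : W.AtomFamily a) (x : E) :
    ∃ k : Fin m → ℕ, W.mulSum a k = some x := by
  classical
  obtain ⟨l, hl, hls⟩ := W.exists_atomList x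
  refine ⟨fun t => List.count (a t) l, ?_⟩
  unfold mulSum
  have hperm : ((List.ofFn (fun t => List.replicate (List.count (a t) l) (a t))).flatten).Perm l := by
    rw [List.perm_iff_count]
    intro z
    rw [count_flattenList]
    by_cases hz : ∃ t, a t = z
    · obtain ⟨t₀, rfl⟩ := hz
      rw [Finset.sum_eq_single t₀]
      · simp
      · intro t _ ht
        have : a t ≠ a t₀ := fun he => ht (ha.1 he)
        simp [this]
      · simp
    · push_neg at hz
      have h1 : ∀ t : Fin m, (if a t = z then List.count (a t) l else 0) = 0 := by
        intro t; simp [hz t]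
      rw [Finset.sum_congr rfl (fun t _ => h1 t), Finset.sum_const_zero]
      symm
      rw [List.count_eq_zero]
      intro hmem
      obtain ⟨t, rfl⟩ := ha.2.2 z (hl z hmem)
      exact hz t rfl
  rw [W.listSum_perm hperm]
  exact hls



lemma state_zero {h : E → ℝ} (hst : W.IsState h) : h W.zero = 0 := by
  have h2 := (hst.2.2 W.zero W.one W.one (W.zero_oplus W.one)).2
  linarith

lemma state_listSum {h : E → ℝ} (hst : W.IsState h) :
    ∀ {l : List E} {x : E}, W.listSum l = some x → h x = (l.map h).sum := by
  intro l
  induction l with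
  | nil =>
    intro x hx
    obtain rfl := Option.some.inj hx
    simpa using W.state_zero hst
  | cons y l ih =>
    intro x hx
    rw [W.listSum_cons, Option.bind_eq_some_iff] at hx
    obtain ⟨u, hu, hyu⟩ := hx
    rw [List.map_cons, List.sum_cons, ← ih hu]
    exact (hst.2.2 y u x hyu).2

lemma state_mulSum {h : E → ℝ} (hst : W.IsState h) {m : ℕ} {a : Fin m → E} {k : Fin m → ℕ}
    {x : E} (hk : W.mulSum a k = some x) :
    h x = ∑ t : Fin m, (k t : ℝ) * h (a t) := by
  unfold mulSum at hk
  rw [W.state_listSum hst hk, List.map_flatten, List.map_ofFn]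
  rw [List.sum_flatten, List.map_ofFn, List.sum_ofFn]
  refine Finset.sum_congr rfl (fun t _ => ?_)
  simp [Function.comp, List.map_replicate, List.sum_replicate, nsmul_eq_mul]



end EffectAlgebra

lemma rank_augment_of_solution {n m : ℕ} (A : Matrix (Fin n) (Fin m) ℕ) (s : Fin m → ℝ)
    (hs : ∀ i, ∑ t : Fin m, (A i t : ℝ) * s t = 1) :
    (A.map (fun x : ℕ => (x : ℚ))).rank = (augmentOnes (A.map (fun x : ℕ => (x : ℚ)))).rank := by
  classical
  set Q : Matrix (Fin n) (Fin m) ℚ := A.map (fun x : ℕ => (x : ℚ)) with hQ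
  have hones : (fun _ : Fin n => (1 : ℚ)) ∈ Submodule.span ℚ (Set.range Q.transpose) := by
    by_contra hmem
    obtain ⟨f, hf1, hf2⟩ := Submodule.exists_dual_map_eq_bot_of_notMem hmem inferInstance
    have hcol : ∀ t, f (Q.transpose t) = 0 := by
      intro t
      have hm : f (Q.transpose t) ∈ (Submodule.span ℚ (Set.range Q.transpose)).map f :=
        Submodule.mem_map_of_mem (Submodule.subset_span ⟨t, rfl⟩)
      rw [hf2] at hm
      exact (Submodule.mem_bot ℚ).1 hm
    set c : Fin n → ℚ := fun i => f (fun j => if i = j then 1 else 0) with hc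
    have hrep : ∀ v : Fin n → ℚ, f v = ∑ i, v i * c i := by
      intro v
      rw [LinearMap.pi_apply_eq_sum_univ f v]
      simp [hc, smul_eq_mul]
    have hcol' : ∀ t, ∑ i, (A i t : ℚ) * c i = 0 := by
      intro t
      have h := hcol t
      rw [hrep] at h
      simpa [hQ, Matrix.transpose_apply, Matrix.map_apply] using h
    have hones' : (∑ i, c i) ≠ 0 := by
      have h := hf1
      rw [hrep] at h
      simpa using h
    have hreal : ∑ i, (c i : ℝ) = 0 := by
      have e1 : ∑ i, (c i : ℝ) = ∑ i, (c i : ℝ) * (∑ t, (A i t : ℝ) * s t) := by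
        refine Finset.sum_congr rfl (fun i _ => ?_)
        rw [hs i, mul_one]
      rw [e1]
      have e2 : ∀ i : Fin n, (c i : ℝ) * (∑ t, (A i t : ℝ) * s t)
          = ∑ t, ((A i t : ℝ) * (c i : ℝ)) * s t := by
        intro i
        rw [Finset.mul_sum]
        refine Finset.sum_congr rfl (fun t _ => by ring)
      rw [Finset.sum_congr rfl (fun i _ => e2 i), Finset.sum_comm]
      have e3 : ∀ t : Fin m, ∑ i, ((A i t : ℝ) * (c i : ℝ)) * s t = 0 := by
        intro t
        rw [← Finset.sum_mul]
        have : ∑ i, (A i t : ℝ) * (c i : ℝ) = 0 := by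
          have := hcol' t
          have hcast : ((∑ i, (A i t : ℚ) * c i : ℚ) : ℝ) = ∑ i, (A i t : ℝ) * (c i : ℝ) := by
            push_cast
            rfl
          rw [this] at hcast
          simpa using hcast.symm
        rw [this, zero_mul]
      rw [Finset.sum_congr rfl (fun t _ => e3 t), Finset.sum_const_zero]
    apply hones'
    have : ((∑ i, c i : ℚ) : ℝ) = 0 := by push_cast; exact hreal
    exact_mod_cast this
  have hset : Set.range (augmentOnes Q).transpose
      = insert (fun _ : Fin n => (1 : ℚ)) (Set.range Q.transpose) := by
    ext v
    constructor
    · rintro ⟨j, rfl⟩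
      by_cases hj : (j : ℕ) < m
      · refine Or.inr ⟨⟨j, hj⟩, ?_⟩
        funext i
        simp [augmentOnes, hj]
      · refine Or.inl ?_
        funext i
        simp [augmentOnes, hj]
    · rintro (rfl | ⟨t, rfl⟩)
      · refine ⟨⟨m, lt_add_one m⟩, ?_⟩
        funext i
        simp [augmentOnes]
      · refine ⟨⟨t, t.2.trans (lt_add_one m)⟩, ?_⟩
        funext i
        simp [augmentOnes, t.2]
  rw [Matrix.rank_eq_finrank_span_cols, Matrix.rank_eq_finrank_span_cols, Matrix.col, Matrix.col, hset,
    Submodule.span_insert_eq_span hones]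


/-- Main theorem: a finite effect algebra `E` has a state iff
`rank A = rank (A|1)` and `A·s = 1` has a nonnegative real solution. -/
theorem has_state_iff {E : Type*} [Fintype E] (W : EffectAlgebra E)
    {m n : ℕ} (a : Fin m → E) (ha : W.AtomFamily a)
    (A : Matrix (Fin n) (Fin m) ℕ) (hA : W.MemM a A) :
    (∃ h : E → ℝ, W.IsState h) ↔
      ((A.map (fun x : ℕ => (x : ℚ))).rank
          = (augmentOnes (A.map (fun x : ℕ => (x : ℚ)))).rank ∧
        ∃ s : Fin m → ℝ, (∀ t, 0 ≤ s t) ∧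
          ∀ i : Fin n, ∑ t : Fin m, (A i t : ℝ) * s t = 1) := by
  classical
  constructor
  · rintro ⟨h, hst⟩
    have hs : ∀ i : Fin n, ∑ t : Fin m, (A i t : ℝ) * h (a t) = 1 := by
      intro i
      have hk : W.mulSum a (A i) = some W.one := by
        have hmem : A i ∈ {k : Fin m → ℕ | ∃ i', A i' = k} := ⟨i, rfl⟩
        rw [hA.2] at hmem
        exact hmem
      have := W.state_mulSum hst hk
      rw [hst.2.1] at this
      exact this.symm
    exact ⟨rank_augment_of_solution A (fun t => h (a t)) hs, fun t => h (a t),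
      fun t => (hst.1 (a t)).1, hs⟩
  · rintro ⟨-, s, hs0, hs1⟩
    set val : (Fin m → ℕ) → ℝ := fun k => ∑ t, (k t : ℝ) * s t with hval
    have hseq : ∀ k : Fin m → ℕ, W.mulSum a k = some W.one → val k = 1 := by
      intro k hk
      have hk' : k ∈ W.SeqSet a := hk
      rw [← hA.2] at hk'
      obtain ⟨i, rfl⟩ := hk'
      exact hs1 i
    have valadd : ∀ k l : Fin m → ℕ, val (k + l) = val k + val l := by
      intro k l
      simp only [hval, Pi.add_apply, Nat.cast_add, add_mul, Finset.sum_add_distrib]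
    have welldef : ∀ (x : E) (k k' : Fin m → ℕ), W.mulSum a k = some x →
        W.mulSum a k' = some x → val k = val k' := by
      intro x k k' hk hk'
      obtain ⟨x', hx', -⟩ := W.orthosupp x
      obtain ⟨l, hl⟩ := W.exists_mulSum ha x'
      have e1 := hseq _ (W.mulSum_oplus hk hl hx')
      have e2 := hseq _ (W.mulSum_oplus hk' hl hx')
      rw [valadd] at e1 e2
      linarith
    choose dec hdecs using W.exists_mulSum ha
    set h : E → ℝ := fun x => val (dec x) with hh
    have hone : h W.one = 1 := hseq _ (hdecs W.one)
    have hnonneg : ∀ x, 0 ≤ h x := by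
      intro x
      rw [hh]
      dsimp only
      rw [hval]
      exact Finset.sum_nonneg (fun t _ => mul_nonneg (Nat.cast_nonneg _) (hs0 t))
    have hadd : ∀ p q r, W.oplus p q = some r → h r = h p + h q := by
      intro p q r hpq
      have h1 := W.mulSum_oplus (hdecs p) (hdecs q) hpq
      have h2 := welldef r _ _ (hdecs r) h1
      rw [hh]
      dsimp only
      rw [h2, valadd]
    have hle1 : ∀ x, h x ≤ 1 := by
      intro x
      obtain ⟨x', hx', -⟩ := W.orthosupp x
      have h1 := hadd x x' W.one hx'
      have h0 := hnonneg x'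
      rw [hone] at h1
      linarith
    refine ⟨h, fun x => ⟨hnonneg x, hle1 x⟩, hone, fun p q r hpq => ?_⟩
    have h1 := hadd p q r hpq
    exact ⟨h1 ▸ hle1 r, h1⟩
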